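/- arXiv:2409.20383 — 2 statements merged into one kernel-verified Lean document; each statement's English description precedes it below -/
import Mathlib

section
/- For n ≥ 1 define ρ_n : [0,1] → ℝ by ρ_n(r) = 1 for r ≤ r_n = 1 − 1/n and ρ_n(r) = (1−r)(n³(r−r_n)² + n²(r−r_n) + n) for r > r_n. Then ρ_n is twice continuously differentiable on [0,1), continuous on [0,1], satisfies ρ_n(1) = 0, and ρ_n converges pointwise to the constant function 1 on [0,1). -/
open Filter Topology

lemma hd3 (x : ℝ) : HasDerivAt (fun y : ℝ => (max y 0)^3) (3 * (max x 0)^2) x := by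
  rcases lt_trichotomy x 0 with hx | hx | hx
  · have hev : (fun y : ℝ => (max y 0)^3) =ᶠ[𝓝 x] fun _ => (0:ℝ) := by
      filter_upwards [Iio_mem_nhds hx] with y hy
      simp [max_eq_right (Set.mem_Iio.mp hy).le]
    have : HasDerivAt (fun _ : ℝ => (0:ℝ)) 0 x := hasDerivAt_const x 0
    have h := this.congr_of_eventuallyEq hev
    simpa [max_eq_right (le_of_lt hx)] using h
  · subst hx
    rw [hasDerivAt_iff_tendsto_slope]
    simp only [max_self, ne_eq]
    have hb : ∀ᶠ h : ℝ in 𝓝[≠] (0:ℝ), ‖slope (fun y : ℝ => (max y 0)^3) 0 h‖ ≤ h^2 := by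
      filter_upwards [self_mem_nhdsWithin] with h hh
      have hh0 : h ≠ 0 := hh
      rcases le_or_gt h 0 with h1 | h1
      · simp [slope, max_eq_right h1, sq_nonneg]
      · rw [slope_def_field]
        rw [max_eq_left (le_of_lt h1)]
        have : (h^3 - (max (0:ℝ) 0)^3)/(h - 0) = h^2 := by
          field_simp; simp only [max_self]; ring
        rw [this, Real.norm_eq_abs, abs_of_nonneg (sq_nonneg h)]
      
    have hg : Tendsto (fun h : ℝ => h^2) (𝓝[≠] (0:ℝ)) (𝓝 0) := by
      apply tendsto_nhdsWithin_of_tendsto_nhds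
      have := (continuous_pow 2).tendsto (0:ℝ)
      simpa using this
    have := squeeze_zero_norm' hb hg
    simpa using this
  · have hev : (fun y : ℝ => (max y 0)^3) =ᶠ[𝓝 x] fun y => y^3 := by
      filter_upwards [Ioi_mem_nhds hx] with y hy
      simp [max_eq_left (Set.mem_Ioi.mp hy).le]
    have h := (hasDerivAt_pow 3 x).congr_of_eventuallyEq hev
    simpa [max_eq_left (le_of_lt hx)] using h

lemma hd2 (x : ℝ) : HasDerivAt (fun y : ℝ => (max y 0)^2) (2 * max x 0) x := by
  rcases lt_trichotomy x 0 with hx | hx | hx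
  · have hev : (fun y : ℝ => (max y 0)^2) =ᶠ[𝓝 x] fun _ => (0:ℝ) := by
      filter_upwards [Iio_mem_nhds hx] with y hy
      simp [max_eq_right (Set.mem_Iio.mp hy).le]
    have h := (hasDerivAt_const x (0:ℝ)).congr_of_eventuallyEq hev
    simpa [max_eq_right (le_of_lt hx)] using h
  · subst hx
    rw [hasDerivAt_iff_tendsto_slope]
    simp only [max_self]
    have hb : ∀ᶠ h : ℝ in 𝓝[≠] (0:ℝ), ‖slope (fun y : ℝ => (max y 0)^2) 0 h‖ ≤ |h| := by
      filter_upwards [self_mem_nhdsWithin] with h hh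
      have hh0 : h ≠ 0 := hh
      rcases le_or_gt h 0 with h1 | h1
      · simp [slope, max_eq_right h1, abs_nonneg]
      · rw [slope_def_field, max_eq_left (le_of_lt h1)]
        have : (h^2 - (max (0:ℝ) 0)^2)/(h - 0) = h := by
          field_simp; simp only [max_self]; ring
        rw [this, Real.norm_eq_abs]
    have hg : Tendsto (fun h : ℝ => |h|) (𝓝[≠] (0:ℝ)) (𝓝 0) := by
      apply tendsto_nhdsWithin_of_tendsto_nhds
      simpa using continuous_abs.tendsto (0:ℝ)
    have := squeeze_zero_norm' hb hg
    simpa using this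
  · have hev : (fun y : ℝ => (max y 0)^2) =ᶠ[𝓝 x] fun y => y^2 := by
      filter_upwards [Ioi_mem_nhds hx] with y hy
      simp [max_eq_left (Set.mem_Ioi.mp hy).le]
    have h := (hasDerivAt_pow 2 x).congr_of_eventuallyEq hev
    simpa [max_eq_left (le_of_lt hx)] using h

lemma contDiff_cube_max : ContDiff ℝ 2 (fun y : ℝ => (max y 0)^3) := by
  have hderiv3 : deriv (fun y : ℝ => (max y 0)^3) = fun x => 3 * (max x 0)^2 :=
    funext fun x => (hd3 x).deriv
  have hderiv2 : deriv (fun x : ℝ => 3 * (max x 0)^2) = fun x => 3 * (2 * max x 0) :=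
    funext fun x => ((hd2 x).const_mul 3).deriv
  rw [show (2 : WithTop ℕ∞) = 1 + 1 from rfl, contDiff_succ_iff_deriv]
  refine ⟨fun x => (hd3 x).differentiableAt, by simp, ?_⟩
  rw [hderiv3, show (1 : WithTop ℕ∞) = 0 + 1 from rfl, contDiff_succ_iff_deriv]
  refine ⟨fun x => ((hd2 x).const_mul 3).differentiableAt, by simp, ?_⟩
  rw [hderiv2, contDiff_zero]
  exact continuous_const.mul (continuous_const.mul (continuous_id.max continuous_const))
noncomputable def qn (n : ℕ) (r : ℝ) : ℝ :=
  (n : ℝ) ^ 3 * (r - (1 - 1 / (n : ℝ))) ^ 2 + (n : ℝ) ^ 2 * (r - (1 - 1 / (n : ℝ))) + (n : ℝ)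
noncomputable def rhon (n : ℕ) (r : ℝ) : ℝ :=
  if r ≤ 1 - 1 / (n : ℝ) then 1 else (1 - r) * qn n r

lemma rhon_eq (n : ℕ) (hn : 1 ≤ n) (r : ℝ) :
    rhon n r = 1 - (n : ℝ)^3 * (max (r - (1 - 1/(n:ℝ))) 0)^3 := by
  have hn0 : (n : ℝ) ≠ 0 := Nat.cast_ne_zero.mpr (by omega)
  unfold rhon qn
  split_ifs with h
  · rw [max_eq_right (by linarith)]; ring
  · push_neg at h
    rw [max_eq_left (by linarith)]
    field_simp
    ring

/-- For each `n ≥ 1`, `ρ_n` is twice continuously differentiable on `[0,1)`, continuous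
on `[0,1]`, satisfies `ρ_n(1) = 0`, and `ρ_n` converges pointwise to `1` on `[0,1)`. -/
theorem stmt_4 :
    (∀ n : ℕ, 1 ≤ n →
      ContDiffOn ℝ 2 (rhon n) (Set.Ico (0 : ℝ) 1) ∧
      ContinuousOn (rhon n) (Set.Icc (0 : ℝ) 1) ∧
      rhon n 1 = 0) ∧
    ∀ r ∈ Set.Ico (0 : ℝ) 1, Tendsto (fun n : ℕ => rhon n r) atTop (𝓝 1) := by
  constructor
  · intro n hn
    have hsm : ContDiff ℝ 2 (rhon n) := by
      have h1 : ContDiff ℝ 2 (fun r : ℝ => 1 - (n : ℝ)^3 * (max (r - (1 - 1/(n:ℝ))) 0)^3) :=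
        contDiff_const.sub (contDiff_const.mul
          (contDiff_cube_max.comp (contDiff_id.sub contDiff_const)))
      have h2 : rhon n = fun r : ℝ => 1 - (n : ℝ)^3 * (max (r - (1 - 1/(n:ℝ))) 0)^3 :=
        funext (rhon_eq n hn)
      rw [h2]; exact h1
    refine ⟨hsm.contDiffOn, hsm.continuous.continuousOn, ?_⟩
    have hn0 : (0 : ℝ) < 1 / (n : ℝ) := by positivity
    unfold rhon
    rw [if_neg (by linarith)]
    ring
  · intro r hr
    obtain ⟨hr0, hr1⟩ := hr
    have hpos : (0 : ℝ) < 1 - r := by linarith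
    have hev : ∀ᶠ n : ℕ in atTop, rhon n r = 1 := by
      have h1 : Tendsto (fun n : ℕ => 1 / (n : ℝ)) atTop (𝓝 0) :=
        tendsto_one_div_atTop_nhds_zero_nat
      filter_upwards [h1.eventually (eventually_lt_nhds hpos)] with n hn
      unfold rhon
      rw [if_pos (by linarith)]
    exact tendsto_const_nhds.congr' (hev.mono fun n h => h.symm)
end

section
/- Let Ω = B_1(0) ⊂ ℝ^d and let u be a generalized solution of the PDE (1−|x|)² Δu + τ(x)·Du = 0 in Ω, u = 0 on ∂Ω, where τ ∈ C¹(Ω; ℝ^d) satisfies τ(x) ⊥ x for all x. If u ∈ C²(Ω) ∩ C(Ω̄), then u ≡ 0. -/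
open Filter Topology Metric
open scoped RealInnerProductSpace

/-- The Laplacian of `u`, written as the sum of the second partial derivatives along the
standard coordinate directions of `ℝ^d`. -/
noncomputable def lap {d : ℕ} (u : EuclideanSpace ℝ (Fin d) → ℝ)
    (x : EuclideanSpace ℝ (Fin d)) : ℝ :=
  ∑ i : Fin d,
    fderiv ℝ (fun y => fderiv ℝ u y (EuclideanSpace.single i 1)) x (EuclideanSpace.single i 1)

section Aux

open Set

variable {d : ℕ}

/-- Second derivative test. -/
lemma second_deriv_test {f f' : ℝ → ℝ} {δ a : ℝ} (hδ : 0 < δ)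
    (hdf : ∀ t ∈ Ioo (-δ) δ, HasDerivAt f (f' t) t)
    (hmax : ∀ t ∈ Ioo (-δ) δ, f t ≤ f 0)
    (hdf' : HasDerivAt f' a 0) : a ≤ 0 := by
  by_contra h
  push_neg at h
  have h0 : (0:ℝ) ∈ Ioo (-δ) δ := by constructor <;> linarith
  have hloc : IsLocalMax f 0 := by
    filter_upwards [Ioo_mem_nhds (by linarith : -δ < (0:ℝ)) hδ] with t ht using hmax t ht
  have hf'0 : f' 0 = 0 := by
    have := hloc.deriv_eq_zero
    rwa [(hdf 0 h0).deriv] at this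
  have hs := hasDerivAt_iff_tendsto_slope.mp hdf'
  have hpos : ∀ᶠ t in 𝓝[>] (0:ℝ), 0 < slope f' 0 t := by
    have : ∀ᶠ t in 𝓝[≠] (0:ℝ), 0 < slope f' 0 t :=
      hs.eventually (eventually_gt_nhds h)
    exact this.filter_mono (nhdsWithin_mono _ (fun t ht => ne_of_gt ht))
  obtain ⟨η, hη, hη'⟩ := (nhdsGT_basis_of_exists_gt ⟨1, by norm_num⟩).eventually_iff.mp hpos
  set c := min (η/2) (δ/2) with hc
  have hc0 : 0 < c := lt_min (by linarith) (by linarith)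
  have hcδ : c < δ := lt_of_le_of_lt (min_le_right _ _) (by linarith)
  have hcη : c < η := lt_of_le_of_lt (min_le_left _ _) (by linarith)
  have hfpos : ∀ t ∈ Ioo (0:ℝ) c, 0 < f' t := by
    intro t ht
    have := hη' ⟨ht.1, lt_trans ht.2 hcη⟩
    have ht0 : (0:ℝ) < t := ht.1
    rw [slope_def_field, div_pos_iff] at this
    rcases this with ⟨h1, _⟩ | ⟨_, h2⟩
    · rw [hf'0, sub_zero] at h1; linarith [ht.1]
    · simp at h2; linarith
  have hsub : Icc (0:ℝ) c ⊆ Ioo (-δ) δ := fun t ht =>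
    ⟨by linarith [ht.1], lt_of_le_of_lt ht.2 hcδ⟩
  have hmono : StrictMonoOn f (Icc (0:ℝ) c) := by
    apply strictMonoOn_of_deriv_pos (convex_Icc _ _)
    · intro t ht
      exact (hdf t (hsub ht)).continuousAt.continuousWithinAt
    · intro t ht
      rw [interior_Icc] at ht
      rw [(hdf t (hsub ⟨le_of_lt ht.1, le_of_lt ht.2⟩)).deriv]
      exact hfpos t ht
  have h1 : f 0 < f c := hmono ⟨le_refl _, le_of_lt hc0⟩ ⟨le_of_lt hc0, le_refl _⟩ hc0
  have h2 : f c ≤ f 0 := hmax c (hsub ⟨le_of_lt hc0, le_refl _⟩)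
  linarith

lemma euclid_proj_apply (i : Fin d) (x : EuclideanSpace ℝ (Fin d)) :
    EuclideanSpace.proj (𝕜 := ℝ) i x = x i := rfl

lemma abs_apply_le_norm (i : Fin d) (x : EuclideanSpace ℝ (Fin d)) : |x i| ≤ ‖x‖ := by
  have h := abs_real_inner_le_norm (EuclideanSpace.single i (1:ℝ)) x
  simpa [EuclideanSpace.inner_single_left, EuclideanSpace.norm_single] using h

/-- the perturbation function -/
noncomputable def pert (d : ℕ) (c : ℝ) (i : Fin d) (x : EuclideanSpace ℝ (Fin d)) : ℝ :=
  Real.exp (c * x i)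

lemma pert_hasFDerivAt (c : ℝ) (i : Fin d) (x : EuclideanSpace ℝ (Fin d)) :
    HasFDerivAt (pert d c i) ((c * Real.exp (c * x i)) • (EuclideanSpace.proj i (𝕜 := ℝ))) x := by
  have h1 : HasFDerivAt (fun y : EuclideanSpace ℝ (Fin d) => c * y i)
      (c • (EuclideanSpace.proj i (𝕜 := ℝ))) x := by
    have := (EuclideanSpace.proj i (𝕜 := ℝ)).hasFDerivAt (x := x)
    exact this.const_smul c
  have h2 : HasDerivAt Real.exp (Real.exp (c * x i)) (c * x i) := Real.hasDerivAt_exp _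
  have := h2.comp_hasFDerivAt x h1
  have h3 : HasFDerivAt (pert d c i) ((Real.exp (c * x i)) • (c • EuclideanSpace.proj i (𝕜 := ℝ))) x := this
  rw [smul_smul, mul_comm (Real.exp _) c] at h3
  exact h3

lemma pert_contDiff (c : ℝ) (i : Fin d) : ContDiff ℝ ⊤ (pert d c i) := by
  apply Real.contDiff_exp.comp
  exact (contDiff_const.mul ((EuclideanSpace.proj i (𝕜 := ℝ)).contDiff))

lemma pert_fderiv (c : ℝ) (i : Fin d) (x : EuclideanSpace ℝ (Fin d)) :
    fderiv ℝ (pert d c i) x = (c * Real.exp (c * x i)) • (EuclideanSpace.proj i (𝕜 := ℝ)) :=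
  (pert_hasFDerivAt c i x).fderiv

lemma pert_fderiv_apply (c : ℝ) (i j : Fin d) (x : EuclideanSpace ℝ (Fin d)) :
    fderiv ℝ (pert d c i) x (EuclideanSpace.single j 1) =
      if j = i then c * Real.exp (c * x i) else 0 := by
  rw [pert_fderiv]
  by_cases h : j = i
  · subst h; simp [euclid_proj_apply, EuclideanSpace.single_apply]
  · simp [euclid_proj_apply, EuclideanSpace.single_apply, h, Ne.symm h]

lemma pert_gradient (c : ℝ) (i : Fin d) (x : EuclideanSpace ℝ (Fin d)) :
    gradient (pert d c i) x = (c * Real.exp (c * x i)) • EuclideanSpace.single i (1:ℝ) := by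
  unfold gradient
  rw [pert_fderiv]
  rw [map_smul]
  congr 1
  apply (InnerProductSpace.toDual ℝ (EuclideanSpace ℝ (Fin d))).injective
  apply ContinuousLinearMap.ext
  intro y
  rw [LinearIsometryEquiv.apply_symm_apply]
  rw [InnerProductSpace.toDual_apply_apply]
  rw [EuclideanSpace.inner_single_left]
  simp [euclid_proj_apply]

lemma pert_lap (c : ℝ) (i : Fin d) (x : EuclideanSpace ℝ (Fin d)) :
    lap (pert d c i) x = c ^ 2 * Real.exp (c * x i) := by
  unfold lap
  have key : ∀ j : Fin d,
      fderiv ℝ (fun y => fderiv ℝ (pert d c i) y (EuclideanSpace.single j 1)) x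
        (EuclideanSpace.single j 1) = if j = i then c ^ 2 * Real.exp (c * x i) else 0 := by
    intro j
    have he : (fun y : EuclideanSpace ℝ (Fin d) =>
        fderiv ℝ (pert d c i) y (EuclideanSpace.single j 1))
        = fun y => if j = i then c * pert d c i y else 0 := by
      ext y
      rw [pert_fderiv_apply]
      split <;> simp [pert]
    rw [he]
    by_cases hji : j = i
    · simp only [hji, if_true]
      rw [fderiv_const_mul (by exact (pert_contDiff c i).differentiable (by simp) x)]
      subst hji
      simp only [ContinuousLinearMap.coe_smul', Pi.smul_apply, smul_eq_mul]
      rw [pert_fderiv_apply]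
      simp [pow_two]; ring
    · simp [hji]
  rw [Finset.sum_congr rfl (fun j _ => key j)]
  simp

lemma lap_neg (u : EuclideanSpace ℝ (Fin d) → ℝ) (x : EuclideanSpace ℝ (Fin d)) :
    lap (fun y => -u y) x = -lap u x := by
  unfold lap
  rw [← Finset.sum_neg_distrib]
  refine Finset.sum_congr rfl fun i _ => ?_
  have h1 : (fun y : EuclideanSpace ℝ (Fin d) =>
      fderiv ℝ (fun z => -u z) y (EuclideanSpace.single i 1))
      = fun y => -(fderiv ℝ u y (EuclideanSpace.single i 1)) := by
    ext y; rw [fderiv_fun_neg]; rfl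
  rw [h1, fderiv_fun_neg]
  rfl

lemma gradient_neg (u : EuclideanSpace ℝ (Fin d) → ℝ) (x : EuclideanSpace ℝ (Fin d)) :
    gradient (fun y => -u y) x = -gradient u x := by
  unfold gradient
  rw [fderiv_fun_neg, map_neg]

lemma fderiv_apply_differentiableAt {u : EuclideanSpace ℝ (Fin d) → ℝ}
    {x : EuclideanSpace ℝ (Fin d)} (hu : ContDiffAt ℝ 2 u x) (v : EuclideanSpace ℝ (Fin d)) :
    DifferentiableAt ℝ (fun y => fderiv ℝ u y v) x := by
  have h := hu.fderiv_right (m := 1) (by norm_num)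
  exact (h.differentiableAt (by norm_num)).clm_apply (differentiableAt_const v)

lemma lap_add {u v : EuclideanSpace ℝ (Fin d) → ℝ} {x : EuclideanSpace ℝ (Fin d)}
    (hu : ContDiffAt ℝ 2 u x) (hv : ContDiff ℝ ⊤ v) :
    lap (fun y => u y + v y) x = lap u x + lap v x := by
  unfold lap
  rw [← Finset.sum_add_distrib]
  refine Finset.sum_congr rfl fun i _ => ?_
  have hev : (fun y : EuclideanSpace ℝ (Fin d) =>
      fderiv ℝ (fun z => u z + v z) y (EuclideanSpace.single i 1)) =ᶠ[𝓝 x]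
      (fun y => fderiv ℝ u y (EuclideanSpace.single i 1)
        + fderiv ℝ v y (EuclideanSpace.single i 1)) := by
    filter_upwards [hu.eventually (by norm_num)] with y hy
    rw [fderiv_fun_add (hy.differentiableAt (by norm_num)) ((hv.differentiable (by simp)) y)]
    rfl
  rw [hev.fderiv_eq]
  rw [fderiv_fun_add (fderiv_apply_differentiableAt hu _)
    (fderiv_apply_differentiableAt (hv.contDiffAt.of_le le_top) _)]
  rfl

lemma lap_const_mul {v : EuclideanSpace ℝ (Fin d) → ℝ} (hv : ContDiff ℝ ⊤ v)
    (c : ℝ) (x : EuclideanSpace ℝ (Fin d)) :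
    lap (fun y => c * v y) x = c * lap v x := by
  unfold lap
  rw [Finset.mul_sum]
  refine Finset.sum_congr rfl fun i _ => ?_
  have h1 : (fun y : EuclideanSpace ℝ (Fin d) =>
      fderiv ℝ (fun z => c * v z) y (EuclideanSpace.single i 1))
      = fun y => c * (fderiv ℝ v y (EuclideanSpace.single i 1)) := by
    ext y
    rw [fderiv_const_mul ((hv.differentiable (by simp)) y)]
    rfl
  rw [h1, fderiv_const_mul (fderiv_apply_differentiableAt (hv.contDiffAt.of_le le_top) _)]
  rfl

lemma gradient_add' {u v : EuclideanSpace ℝ (Fin d) → ℝ} {x : EuclideanSpace ℝ (Fin d)}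
    (hu : DifferentiableAt ℝ u x) (hv : DifferentiableAt ℝ v x) :
    gradient (fun y => u y + v y) x = gradient u x + gradient v x := by
  unfold gradient
  rw [fderiv_fun_add hu hv, map_add]

lemma gradient_const_mul' {v : EuclideanSpace ℝ (Fin d) → ℝ} {x : EuclideanSpace ℝ (Fin d)}
    (hv : DifferentiableAt ℝ v x) (c : ℝ) :
    gradient (fun y => c * v y) x = c • gradient v x := by
  unfold gradient
  rw [fderiv_const_mul hv, map_smul]

lemma lap_nonpos_of_isMaxOn {w : EuclideanSpace ℝ (Fin d) → ℝ} {r : ℝ}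
    (hw : ContDiffOn ℝ 2 w (ball (0 : EuclideanSpace ℝ (Fin d)) 1))
    {x₀ : EuclideanSpace ℝ (Fin d)} (hmax : IsMaxOn w (closedBall 0 r) x₀)
    (hx₀ : ‖x₀‖ < r) (hr : r < 1) : lap w x₀ ≤ 0 := by
  have hx₀b : x₀ ∈ ball (0 : EuclideanSpace ℝ (Fin d)) 1 := by
    rw [mem_ball, dist_zero_right]; linarith
  set δ := r - ‖x₀‖ with hδdef
  have hδ : 0 < δ := by rw [hδdef]; linarith
  unfold lap
  apply Finset.sum_nonpos
  intro i _
  set e : EuclideanSpace ℝ (Fin d) := EuclideanSpace.single i 1 with he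
  have hne : ‖e‖ = 1 := by rw [he, EuclideanSpace.norm_single]; norm_num
  have hmem : ∀ t ∈ Ioo (-δ) δ, x₀ + t • e ∈ closedBall (0 : EuclideanSpace ℝ (Fin d)) r := by
    intro t ht
    rw [mem_closedBall, dist_zero_right]
    have habs : |t| < δ := abs_lt.mpr ⟨ht.1, ht.2⟩
    calc ‖x₀ + t • e‖ ≤ ‖x₀‖ + ‖t • e‖ := norm_add_le _ _
      _ = ‖x₀‖ + |t| := by rw [norm_smul, hne, Real.norm_eq_abs, mul_one]
      _ ≤ r := by rw [hδdef] at habs; linarith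
  have hmemb : ∀ t ∈ Ioo (-δ) δ, x₀ + t • e ∈ ball (0 : EuclideanSpace ℝ (Fin d)) 1 := by
    intro t ht
    have := hmem t ht
    rw [mem_closedBall, dist_zero_right] at this
    rw [mem_ball, dist_zero_right]
    linarith
  have hline : ∀ t : ℝ, HasDerivAt (fun s : ℝ => x₀ + s • e) e t := by
    intro t
    simpa using ((hasDerivAt_id t).smul_const e).const_add x₀
  set ψ : EuclideanSpace ℝ (Fin d) → ℝ := fun y => fderiv ℝ w y e with hψ
  have hdf : ∀ t ∈ Ioo (-δ) δ, HasDerivAt (fun s => w (x₀ + s • e)) (ψ (x₀ + t • e)) t := by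
    intro t ht
    have hwd : DifferentiableAt ℝ w (x₀ + t • e) :=
      (hw.contDiffAt (isOpen_ball.mem_nhds (hmemb t ht))).differentiableAt (by norm_num)
    exact hwd.hasFDerivAt.comp_hasDerivAt t (hline t)
  have hmaxf : ∀ t ∈ Ioo (-δ) δ, w (x₀ + t • e) ≤ w (x₀ + (0:ℝ) • e) := by
    intro t ht
    have h1 := hmax (hmem t ht)
    simp only [zero_smul, add_zero]
    exact h1
  have hψd : DifferentiableAt ℝ ψ x₀ :=
    fderiv_apply_differentiableAt (hw.contDiffAt (isOpen_ball.mem_nhds hx₀b)) e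
  have hdf' : HasDerivAt (fun t : ℝ => ψ (x₀ + t • e)) (fderiv ℝ ψ x₀ e) 0 := by
    have hψ0 : HasFDerivAt ψ (fderiv ℝ ψ x₀) (x₀ + (0:ℝ) • e) := by
      simpa using hψd.hasFDerivAt
    exact hψ0.comp_hasDerivAt (0:ℝ) (hline 0)
  exact second_deriv_test hδ hdf hmaxf hdf'

set_option maxHeartbeats 1000000 in
lemma step (hd : 1 ≤ d) {u : EuclideanSpace ℝ (Fin d) → ℝ} {τv : EuclideanSpace ℝ (Fin d) → EuclideanSpace ℝ (Fin d)}
    (hτ : ContDiffOn ℝ 1 τv (ball (0 : EuclideanSpace ℝ (Fin d)) 1))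
    (hu2 : ContDiffOn ℝ 2 u (ball (0 : EuclideanSpace ℝ (Fin d)) 1))
    (huc : ContinuousOn u (closedBall (0 : EuclideanSpace ℝ (Fin d)) 1))
    (hpde : ∀ x ∈ ball (0 : EuclideanSpace ℝ (Fin d)) 1,
      (1 - ‖x‖) ^ 2 * lap u x + ⟪τv x, gradient u x⟫ = 0)
    {r : ℝ} (hr0 : 0 < r) (hr1 : r < 1) {ε : ℝ} (hε : 0 < ε) :
    ∃ y : EuclideanSpace ℝ (Fin d), ‖y‖ = r ∧
      ∀ x ∈ closedBall (0 : EuclideanSpace ℝ (Fin d)) r, u x ≤ u y + ε := by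
  classical
  set i₀ : Fin d := ⟨0, hd⟩ with hi₀
  clear_value i₀
  have hsub : closedBall (0 : EuclideanSpace ℝ (Fin d)) r ⊆ ball 0 1 := by
    intro z hz
    rw [mem_closedBall, dist_zero_right] at hz
    rw [mem_ball, dist_zero_right]
    linarith
  obtain ⟨M, hM⟩ := (isCompact_closedBall (0 : EuclideanSpace ℝ (Fin d)) r).exists_bound_of_continuousOn
    (hτ.continuousOn.mono hsub)
  have h0mem : (0 : EuclideanSpace ℝ (Fin d)) ∈ closedBall (0 : EuclideanSpace ℝ (Fin d)) r := by
    simp [hr0.le]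
  have hM0 : 0 ≤ M := le_trans (norm_nonneg _) (hM 0 h0mem)
  have hrpos : 0 < (1 - r) ^ 2 := by nlinarith
  set lam : ℝ := (M + 1) / (1 - r) ^ 2 with hlamdef
  have hlam : 0 < lam := by rw [hlamdef]; positivity
  have hlam1 : lam * (1 - r) ^ 2 = M + 1 := by
    rw [hlamdef]; exact div_mul_cancel₀ _ hrpos.ne'
  clear_value lam
  clear hlamdef
  set ε' : ℝ := ε / Real.exp lam with hε'def
  have hε' : 0 < ε' := by rw [hε'def]; exact div_pos hε (Real.exp_pos _)
  have hε'exp : ε' * Real.exp lam = ε := by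
    rw [hε'def]; field_simp
  clear_value ε'
  clear hε'def
  set w : EuclideanSpace ℝ (Fin d) → ℝ := fun x => u x + ε' * pert d lam i₀ x with hwdef
  have hpertC : ContDiff ℝ ⊤ (fun y => ε' * pert d lam i₀ y) :=
    contDiff_const.mul (pert_contDiff lam i₀)
  have hwc : ContinuousOn w (closedBall (0 : EuclideanSpace ℝ (Fin d)) r) :=
    (huc.mono (closedBall_subset_closedBall hr1.le)).add
      (hpertC.continuous.continuousOn)
  obtain ⟨x₀, hx₀mem, hx₀max⟩ := (isCompact_closedBall (0 : EuclideanSpace ℝ (Fin d)) r).exists_isMaxOn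
    ⟨0, h0mem⟩ hwc
  have hx₀r : ‖x₀‖ ≤ r := by rwa [mem_closedBall, dist_zero_right] at hx₀mem
  rcases eq_or_lt_of_le hx₀r with heq | hlt
  · -- max on the sphere of radius r : done
    refine ⟨x₀, heq, fun x hx => ?_⟩
    have h1 : u x ≤ w x := by
      have hp : 0 < ε' * pert d lam i₀ x := mul_pos hε' (Real.exp_pos _)
      have : w x = u x + ε' * pert d lam i₀ x := rfl
      linarith [this]
    have h2 : w x ≤ w x₀ := hx₀max hx
    have h3 : w x₀ ≤ u x₀ + ε := by
      have hwx₀ : w x₀ = u x₀ + ε' * pert d lam i₀ x₀ := rfl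
      have hle : x₀ i₀ ≤ 1 := by
        have h4 := abs_apply_le_norm i₀ x₀
        have h5 := abs_le.mp (le_trans h4 hx₀r)
        linarith [h5.2, hr1]
      have hppp : pert d lam i₀ x₀ ≤ Real.exp lam := by
        rw [pert]
        apply Real.exp_le_exp.mpr
        nlinarith
      nlinarith [Real.exp_pos lam]
    linarith
  · -- interior max : contradiction
    exfalso
    have hx₀b : x₀ ∈ ball (0 : EuclideanSpace ℝ (Fin d)) 1 := by
      rw [mem_ball, dist_zero_right]; linarith
    have hx₀nhds : closedBall (0 : EuclideanSpace ℝ (Fin d)) r ∈ 𝓝 x₀ :=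
      Filter.mem_of_superset (isOpen_ball.mem_nhds (by rw [mem_ball, dist_zero_right]; exact hlt))
        ball_subset_closedBall
    have hw2 : ContDiffOn ℝ 2 w (ball (0 : EuclideanSpace ℝ (Fin d)) 1) :=
      hu2.add ((hpertC.of_le le_top).contDiffOn)
    have hlapw : lap w x₀ ≤ 0 := lap_nonpos_of_isMaxOn hw2 hx₀max hlt hr1
    have hloc : IsLocalMax w x₀ := hx₀max.isLocalMax hx₀nhds
    have hfd0 : fderiv ℝ w x₀ = 0 := hloc.fderiv_eq_zero
    have hgrad0 : gradient w x₀ = 0 := by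
      unfold gradient
      rw [hfd0, map_zero]
    have hucd : ContDiffAt ℝ 2 u x₀ := hu2.contDiffAt (isOpen_ball.mem_nhds hx₀b)
    have hudiff : DifferentiableAt ℝ u x₀ := hucd.differentiableAt (by norm_num)
    have hpdiff : DifferentiableAt ℝ (fun y => ε' * pert d lam i₀ y) x₀ :=
      hpertC.differentiable (by simp) x₀
    set E := Real.exp (lam * x₀ i₀) with hEdef
    have hE : 0 < E := by rw [hEdef]; exact Real.exp_pos _
    have hgradw : gradient w x₀ = gradient u x₀ +
        (ε' * (lam * E)) • EuclideanSpace.single i₀ (1:ℝ) := by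
      rw [hwdef]
      rw [gradient_add' hudiff hpdiff]
      rw [gradient_const_mul' ((pert_contDiff lam i₀).differentiable (by simp) x₀) ε']
      rw [pert_gradient, hEdef, smul_smul]
    have hlapw_eq : lap w x₀ = lap u x₀ + ε' * (lam ^ 2 * E) := by
      rw [hwdef]
      rw [lap_add hucd hpertC]
      rw [lap_const_mul (pert_contDiff lam i₀) ε' x₀]
      rw [pert_lap, hEdef]
    clear_value E
    clear hEdef
    have hgradu : gradient u x₀ = -((ε' * (lam * E)) • EuclideanSpace.single i₀ (1:ℝ)) := by
      rw [hgrad0] at hgradw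
      exact eq_neg_of_add_eq_zero_left hgradw.symm
    have hinner : ⟪τv x₀, gradient u x₀⟫ = -(ε' * (lam * E) * (τv x₀ i₀)) := by
      rw [hgradu, inner_neg_right, real_inner_smul_right]
      rw [EuclideanSpace.inner_single_right]
      simp only [starRingEnd_apply, star_trivial]
      ring
    have hpde0 := hpde x₀ hx₀b
    have hτb : |τv x₀ i₀| ≤ M := le_trans (abs_apply_le_norm i₀ (τv x₀)) (hM x₀ hx₀mem)
    have hτlow : -M ≤ τv x₀ i₀ := by
      have h6 := abs_le.mp hτb
      linarith [h6.1]
    have hnx : 0 ≤ ‖x₀‖ := norm_nonneg _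
    have hsq : (1 - r) ^ 2 ≤ (1 - ‖x₀‖) ^ 2 := by nlinarith
    have hlamsq : M + 1 ≤ lam * (1 - ‖x₀‖) ^ 2 := by nlinarith
    have hlapu_eq : (1 - ‖x₀‖) ^ 2 * lap u x₀ = ε' * (lam * E) * (τv x₀ i₀) := by
      rw [hinner] at hpde0
      linarith
    have hkey : (1 - ‖x₀‖) ^ 2 * lap w x₀ =
        ε' * (lam * E) * (τv x₀ i₀) + ε' * (lam ^ 2 * E) * (1 - ‖x₀‖) ^ 2 := by
      rw [hlapw_eq]
      nlinarith [hlapu_eq]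
    have hlhs : (1 - ‖x₀‖) ^ 2 * lap w x₀ ≤ 0 :=
      mul_nonpos_of_nonneg_of_nonpos (by positivity) hlapw
    have hrhs : 0 < ε' * (lam * E) * (τv x₀ i₀) + ε' * (lam ^ 2 * E) * (1 - ‖x₀‖) ^ 2 := by
      have hfac : ε' * (lam * E) * (τv x₀ i₀) + ε' * (lam ^ 2 * E) * (1 - ‖x₀‖) ^ 2
          = ε' * lam * E * ((τv x₀ i₀) + lam * (1 - ‖x₀‖) ^ 2) := by ring
      rw [hfac]
      apply mul_pos (by positivity)
      nlinarith
    linarith [hkey ▸ hlhs]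

end Aux

/-- Let `Ω = B_1(0) ⊂ ℝ^d` and let `u ∈ C²(Ω) ∩ C(Ω̄)` solve
`(1−|x|)²Δu + τ(x)·Du = 0` in `Ω` with `u = 0` on `∂Ω`, where `τ ∈ C¹(Ω; ℝ^d)` satisfies
`τ(x) ⊥ x` for all `x`. Then `u ≡ 0`. -/
theorem stmt_18 (d : ℕ) (hd : 1 ≤ d)
    (u : EuclideanSpace ℝ (Fin d) → ℝ)
    (τ : EuclideanSpace ℝ (Fin d) → EuclideanSpace ℝ (Fin d))
    (hτ : ContDiffOn ℝ 1 τ (ball (0 : EuclideanSpace ℝ (Fin d)) 1))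
    (hτperp : ∀ x, ⟪τ x, x⟫ = 0)
    (hu2 : ContDiffOn ℝ 2 u (ball (0 : EuclideanSpace ℝ (Fin d)) 1))
    (huc : ContinuousOn u (closedBall (0 : EuclideanSpace ℝ (Fin d)) 1))
    (hpde : ∀ x ∈ ball (0 : EuclideanSpace ℝ (Fin d)) 1,
      (1 - ‖x‖) ^ 2 * lap u x + ⟪τ x, gradient u x⟫ = 0)
    (hbdy : ∀ x ∈ sphere (0 : EuclideanSpace ℝ (Fin d)) 1, u x = 0) :
    ∀ x ∈ closedBall (0 : EuclideanSpace ℝ (Fin d)) 1, u x = 0 := by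
  have hside : ∀ (v : EuclideanSpace ℝ (Fin d) → ℝ),
      ContDiffOn ℝ 2 v (ball (0 : EuclideanSpace ℝ (Fin d)) 1) →
      ContinuousOn v (closedBall (0 : EuclideanSpace ℝ (Fin d)) 1) →
      (∀ x ∈ ball (0 : EuclideanSpace ℝ (Fin d)) 1,
        (1 - ‖x‖) ^ 2 * lap v x + ⟪τ x, gradient v x⟫ = 0) →
      (∀ x ∈ sphere (0 : EuclideanSpace ℝ (Fin d)) 1, v x = 0) →
      ∀ x ∈ closedBall (0 : EuclideanSpace ℝ (Fin d)) 1, v x ≤ 0 := by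
    intro v hv2 hvc hvpde hvbdy x hx
    rw [mem_closedBall, dist_zero_right] at hx
    rcases eq_or_lt_of_le hx with heq | hlt
    · exact le_of_eq (hvbdy x (by rwa [mem_sphere, dist_zero_right]))
    · by_contra hpos
      push_neg at hpos
      set δ := v x / 4 with hδdef
      have hδ : 0 < δ := by rw [hδdef]; linarith
      have hunif := (isCompact_closedBall (0 : EuclideanSpace ℝ (Fin d)) 1).uniformContinuousOn_of_continuous hvc
      rw [Metric.uniformContinuousOn_iff] at hunif
      obtain ⟨η, hη, hηs⟩ := hunif δ hδ
      set r := max (max ‖x‖ (1 - η / 2)) (1 / 2) with hrdef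
      have hr0 : 0 < r := lt_of_lt_of_le (by norm_num) (le_max_right _ _)
      have hr1 : r < 1 := by
        apply max_lt (max_lt hlt (by linarith)) (by norm_num)
      have hxr : ‖x‖ ≤ r := le_trans (le_max_left _ _) (le_max_left _ _)
      have hrη : 1 - r < η := by
        have : 1 - η / 2 ≤ r := le_trans (le_max_right _ _) (le_max_left _ _)
        linarith
      obtain ⟨y, hyr, hy⟩ := step hd hτ hv2 hvc hvpde hr0 hr1 hδ
      have h1 : v x ≤ v y + δ := hy x (by rwa [mem_closedBall, dist_zero_right])
      set z := r⁻¹ • y with hzdef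
      have hz1 : ‖z‖ = 1 := by
        rw [hzdef, norm_smul, hyr, norm_inv, Real.norm_eq_abs, abs_of_pos hr0,
          inv_mul_cancel₀ (ne_of_gt hr0)]
      have hz0 : v z = 0 := hvbdy z (by rwa [mem_sphere, dist_zero_right])
      have hyz : dist y z < η := by
        rw [hzdef, dist_eq_norm]
        have : y - r⁻¹ • y = (1 - r⁻¹) • y := by
          rw [sub_smul, one_smul]
        rw [this, norm_smul, hyr, Real.norm_eq_abs]
        have hr1' : (1:ℝ) ≤ r⁻¹ := (one_le_inv_iff₀).mpr ⟨hr0, hr1.le⟩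
        rw [abs_of_nonpos (by linarith)]
        have heq : -(1 - r⁻¹) * r = 1 - r := by rw [neg_sub, sub_mul, inv_mul_cancel₀ hr0.ne', one_mul]
        rw [heq]
        exact hrη
      have hymem : y ∈ closedBall (0 : EuclideanSpace ℝ (Fin d)) 1 := by
        rw [mem_closedBall, dist_zero_right, hyr]; linarith
      have hzmem : z ∈ closedBall (0 : EuclideanSpace ℝ (Fin d)) 1 := by
        rw [mem_closedBall, dist_zero_right, hz1]
      have h2 := hηs y hymem z hzmem hyz
      rw [Real.dist_eq, hz0, sub_zero] at h2
      have h3 : v y < δ := lt_of_abs_lt h2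
      rw [hδdef] at h1 h3
      linarith
  intro x hx
  have h1 := hside u hu2 huc hpde hbdy x hx
  have h2 := hside (fun y => -u y) hu2.neg huc.neg
    (fun y hy => by
      rw [lap_neg, gradient_neg, inner_neg_right]
      have := hpde y hy
      linarith)
    (fun y hy => by simp [hbdy y hy]) x hx
  simp only [neg_nonpos] at h2
  linarith
end
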